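/- If R and S are m×n matrices over GF(q) with the same row space, then for every subspace W of GF(q)^n and every integer s, the number of m×n matrices with row space W at rank distance s from R equals the number of such matrices at rank distance s from S. -/

import Mathlib

open LinearMap Submodule Matrix

/-- Two linear maps with equal range (from a finite-dimensional vector space)
differ by an automorphism of the domain. -/
lemma exists_comp_eq {F V W : Type*} [Field F] [AddCommGroup V] [Module F V]
    [AddCommGroup W] [Module F W] [FiniteDimensional F V]
    (f g : V →ₗ[F] W) (h : LinearMap.range f = LinearMap.range g) :
    ∃ e : V ≃ₗ[F] V, f ∘ₗ (e : V →ₗ[F] V) = g := by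
  have hker : Module.finrank F (LinearMap.ker g) = Module.finrank F (LinearMap.ker f) := by
    have hf := f.finrank_range_add_finrank_ker
    have hg := g.finrank_range_add_finrank_ker
    rw [h] at hf
    omega
  let k : (LinearMap.ker g) ≃ₗ[F] (LinearMap.ker f) := LinearEquiv.ofFinrankEq _ _ hker
  let φ : (V ⧸ LinearMap.ker g) ≃ₗ[F] (V ⧸ LinearMap.ker f) :=
    g.quotKerEquivRange.trans ((LinearEquiv.ofEq _ _ h.symm).trans f.quotKerEquivRange.symm)
  obtain ⟨Cf, hCf⟩ := Submodule.exists_isCompl (LinearMap.ker f)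
  obtain ⟨Cg, hCg⟩ := Submodule.exists_isCompl (LinearMap.ker g)
  let ψ : Cg ≃ₗ[F] Cf :=
    (Submodule.quotientEquivOfIsCompl _ _ hCg).symm.trans
      (φ.trans (Submodule.quotientEquivOfIsCompl _ _ hCf))
  let e : V ≃ₗ[F] V :=
    (Submodule.prodEquivOfIsCompl _ _ hCg).symm.trans
      ((k.prodCongr ψ).trans (Submodule.prodEquivOfIsCompl _ _ hCf))
  refine ⟨e, ?_⟩
  ext x
  -- decompose x
  set uv := (Submodule.prodEquivOfIsCompl _ _ hCg).symm x with huv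
  have hx : (uv.1 : V) + (uv.2 : V) = x := by
    have := (Submodule.prodEquivOfIsCompl _ _ hCg).apply_symm_apply x
    rwa [Submodule.coe_prodEquivOfIsCompl'] at this
  have he : e x = (k uv.1 : V) + (ψ uv.2 : V) := by
    simp only [e, LinearEquiv.trans_apply, ← huv]
    rw [Submodule.coe_prodEquivOfIsCompl']
    rfl
  have hgx : g x = g (uv.2 : V) := by
    rw [← hx, map_add, (uv.1).2, zero_add]
  -- compute f applied to ψ uv.2
  have hfψ : f (ψ uv.2 : V) = g (uv.2 : V) := by
    have hmk : (Submodule.Quotient.mk (ψ uv.2 : V) : V ⧸ LinearMap.ker f)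
        = φ (Submodule.Quotient.mk (uv.2 : V)) := by
      have h1 : (Submodule.quotientEquivOfIsCompl _ _ hCg).symm uv.2
          = (Submodule.Quotient.mk (uv.2 : V) : V ⧸ LinearMap.ker g) :=
        Submodule.quotientEquivOfIsCompl_symm_apply _ _ hCg _
      have h2 := Submodule.mk_quotientEquivOfIsCompl_apply hCf
        (φ ((Submodule.quotientEquivOfIsCompl _ _ hCg).symm uv.2))
      simp only [ψ, LinearEquiv.trans_apply, h1] at h2
      exact h2
    have hval : ∀ a : V, f a = (f.quotKerEquivRange (Submodule.Quotient.mk a) : W) :=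
      fun a => (f.quotKerEquivRange_apply_mk a).symm
    rw [hval, hmk]
    simp only [φ, LinearEquiv.trans_apply, LinearEquiv.apply_symm_apply,
      LinearEquiv.coe_ofEq_apply, g.quotKerEquivRange_apply_mk]
  simp only [LinearMap.comp_apply, LinearEquiv.coe_coe, he, map_add, LinearMap.map_coe_ker,
    zero_add, hfψ, hgx]

/-- The row space of a matrix: the span of its rows. -/
def rowSpace {F : Type} [Field F] {m n : ℕ} (A : Matrix (Fin m) (Fin n) F) :
    Submodule F (Fin n → F) :=
  Submodule.span F (Set.range fun i => A i)

lemma rowSpace_eq_range {F : Type} [Field F] {m n : ℕ} (A : Matrix (Fin m) (Fin n) F) :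
    rowSpace A = LinearMap.range A.vecMulLinear := by
  rw [range_vecMulLinear]; rfl

lemma rowSpace_unit_mul {F : Type} [Field F] {m n : ℕ}
    (A : Matrix (Fin m) (Fin m) F) (hA : IsUnit A.det) (X : Matrix (Fin m) (Fin n) F) :
    rowSpace (A * X) = rowSpace X := by
  rw [rowSpace_eq_range, rowSpace_eq_range]
  have hcomp : (A * X).vecMulLinear = X.vecMulLinear ∘ₗ A.vecMulLinear := by
    apply LinearMap.ext; intro x
    simp [Matrix.vecMulLinear_apply, Matrix.vecMul_vecMul]
  rw [hcomp, LinearMap.range_comp_of_range_eq_top]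
  rw [LinearMap.range_eq_top]
  intro y
  refine ⟨y ᵥ* A⁻¹, ?_⟩
  simp [Matrix.vecMulLinear_apply, Matrix.vecMul_vecMul, Matrix.nonsing_inv_mul A hA]

theorem stmt5 (F : Type) [Field F] [Fintype F] (m n : ℕ)
    (R S : Matrix (Fin m) (Fin n) F) (h : rowSpace R = rowSpace S)
    (W : Submodule F (Fin n → F)) (s : ℕ) :
    Nat.card {X : Matrix (Fin m) (Fin n) F // rowSpace X = W ∧ (X - R).rank = s} =
      Nat.card {X : Matrix (Fin m) (Fin n) F // rowSpace X = W ∧ (X - S).rank = s} := by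
  classical
  rw [rowSpace_eq_range, rowSpace_eq_range] at h
  obtain ⟨e, he⟩ := exists_comp_eq R.vecMulLinear S.vecMulLinear h
  -- the matrix of e in the vecMul convention
  set A : Matrix (Fin m) (Fin m) F := (LinearMap.toMatrix' (e : (Fin m → F) →ₗ[F] (Fin m → F)))ᵀ
    with hAdef
  have hvecA : ∀ x : Fin m → F, x ᵥ* A = e x := by
    intro x
    rw [hAdef, Matrix.vecMul_transpose]
    have := Matrix.toLin'_toMatrix' (e : (Fin m → F) →ₗ[F] (Fin m → F))
    calc LinearMap.toMatrix' (e : (Fin m → F) →ₗ[F] (Fin m → F)) *ᵥ x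
        = Matrix.toLin' (LinearMap.toMatrix' (e : (Fin m → F) →ₗ[F] (Fin m → F))) x :=
          (Matrix.toLin'_apply _ _).symm
      _ = e x := by rw [this]; rfl
  have hAdet : IsUnit A.det := by
    rw [hAdef, Matrix.det_transpose]
    apply Matrix.isUnit_det_of_right_inverse (B := LinearMap.toMatrix'
      ((e.symm : (Fin m → F) →ₗ[F] (Fin m → F))))
    rw [← LinearMap.toMatrix'_comp]
    have : (e : (Fin m → F) →ₗ[F] (Fin m → F)) ∘ₗ (e.symm : (Fin m → F) →ₗ[F] (Fin m → F))
        = LinearMap.id := by ext x; simp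
    rw [this, LinearMap.toMatrix'_id]
  have hS : S = A * R := by
    ext i j
    have h1 : S.vecMulLinear (Pi.single i 1) = R.vecMulLinear (e (Pi.single i 1)) := by
      rw [← he]; rfl
    have h2 : (Pi.single i 1 : Fin m → F) ᵥ* S = (e (Pi.single i 1)) ᵥ* R := h1
    have h3 : (Pi.single i 1 : Fin m → F) ᵥ* S = S i := Matrix.single_one_vecMul i S
    have h4 : A i = e (Pi.single i 1) := by
      rw [← hvecA]
      have : (Pi.single i 1 : Fin m → F) ᵥ* A = A i := Matrix.single_one_vecMul i A
      rw [this]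
    rw [← h3, h2, Matrix.mul_apply, h4]
    simp [Matrix.vecMul, dotProduct]
  have hAinvdet : IsUnit A⁻¹.det := A.isUnit_nonsing_inv_det hAdet
  have key1 : ∀ X : Matrix (Fin m) (Fin n) F, A * X - S = A * (X - R) := by
    intro X; rw [hS, Matrix.mul_sub]
  have key2 : ∀ Y : Matrix (Fin m) (Fin n) F, A⁻¹ * Y - R = A⁻¹ * (Y - S) := by
    intro Y
    rw [hS, Matrix.mul_sub, ← Matrix.mul_assoc, Matrix.nonsing_inv_mul A hAdet, Matrix.one_mul]
  refine Nat.card_congr ⟨fun X => ⟨A * X.1, ?_, ?_⟩, fun Y => ⟨A⁻¹ * Y.1, ?_, ?_⟩, ?_, ?_⟩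
  · rw [rowSpace_unit_mul A hAdet]; exact X.2.1
  · simp only [key1, Matrix.rank_mul_eq_right_of_isUnit_det A _ hAdet]
    exact X.2.2
  · rw [rowSpace_unit_mul A⁻¹ hAinvdet]; exact Y.2.1
  · simp only [key2, Matrix.rank_mul_eq_right_of_isUnit_det A⁻¹ _ hAinvdet]
    exact Y.2.2
  · intro X
    ext : 1
    simp only
    rw [← Matrix.mul_assoc, Matrix.nonsing_inv_mul A hAdet, Matrix.one_mul]
  · intro Y
    ext : 1
    simp only
    rw [← Matrix.mul_assoc, Matrix.mul_nonsing_inv A hAdet, Matrix.one_mul]
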